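/- If (X₁, X₂) is a centered Gaussian vector and Y₁, Y₂ are independent centered Gaussians with E[Xᵢ²] = E[Yᵢ²] for i = 1, 2, then E[min(|X₁|, |X₂|)] ≥ E[min(|Y₁|, |Y₂|)]. -/

import Mathlib

open MeasureTheory ProbabilityTheory Real
open scoped NNReal ENNReal

namespace GaussMinAux

noncomputable def K : ℝ := ∫ x, |x| ∂(gaussianReal 0 1)
noncomputable def M : ℝ := ∫ x, x ^ 2 ∂(gaussianReal 0 1)

lemma K_nonneg : 0 ≤ K := integral_nonneg fun x => abs_nonneg x

/-- scaling of a gaussian -/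
lemma gaussian_scale (v : ℝ≥0) :
    gaussianReal 0 v = Measure.map (fun x => Real.sqrt v * x) (gaussianReal 0 1) := by
  rw [gaussianReal_map_const_mul]
  congr 1
  · simp
  · ext
    simp [Real.sq_sqrt v.coe_nonneg]

lemma abs_moment (v : ℝ≥0) : ∫ x, |x| ∂(gaussianReal 0 v) = Real.sqrt v * K := by
  rw [gaussian_scale v, integral_map (by fun_prop) measurable_abs.aestronglyMeasurable]
  simp only [Function.comp, abs_mul, abs_of_nonneg (Real.sqrt_nonneg (v : ℝ))]
  rw [integral_const_mul]
  rfl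

lemma sq_moment (v : ℝ≥0) : ∫ x, x ^ 2 ∂(gaussianReal 0 v) = (v : ℝ) * M := by
  rw [gaussian_scale v, integral_map (by fun_prop) (by fun_prop)]
  simp only [mul_pow, Real.sq_sqrt v.coe_nonneg]
  rw [integral_const_mul]
  rfl

lemma pdfReal_eq (v : ℝ≥0) (hv : v ≠ 0) (μ x : ℝ) :
    gaussianPDFReal μ v x = (Real.sqrt (2 * π * v))⁻¹ * Real.exp (-((2 * (v:ℝ))⁻¹) * (x - μ) ^ 2) := by
  have : (0:ℝ) < v := by positivity
  have harg : -(x - μ) ^ 2 / (2 * (v:ℝ)) = -((2 * (v:ℝ))⁻¹) * (x - μ) ^ 2 := by ring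
  rw [gaussianPDFReal, harg]

lemma integrable_sq_mul_exp {b : ℝ} (hb : 0 < b) :
    Integrable (fun x : ℝ => x ^ 2 * Real.exp (-b * x ^ 2)) := by
  have hhalf : 0 < b / 2 := by linarith
  refine ((integrable_exp_neg_mul_sq hhalf).const_mul (2 / b)).mono'
    ((measurable_id.pow_const 2).mul (by measurability)).aestronglyMeasurable ?_
  filter_upwards with x
  have h1 : b / 2 * x ^ 2 ≤ Real.exp (b / 2 * x ^ 2) := by
    have := Real.add_one_le_exp (b / 2 * x ^ 2)
    linarith
  have h2 : Real.exp (-b * x ^ 2) = Real.exp (-(b/2) * x ^ 2) * Real.exp (-(b/2) * x ^ 2) := by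
    rw [← Real.exp_add]; ring_nf
  rw [norm_eq_abs, abs_of_nonneg (by positivity)]
  rw [h2]
  have h3 : x ^ 2 * Real.exp (-(b/2) * x ^ 2) ≤ 2 / b := by
    rw [neg_mul, Real.exp_neg]
    rw [mul_inv_le_iff₀ (Real.exp_pos _)]
    calc x ^ 2 = (2 / b) * (b / 2 * x ^ 2) := by field_simp
    _ ≤ 2 / b * Real.exp (b / 2 * x ^ 2) := by
        apply mul_le_mul_of_nonneg_left h1 (by positivity)
  calc x ^ 2 * (Real.exp (-(b/2) * x ^ 2) * Real.exp (-(b/2) * x ^ 2))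
      = (x ^ 2 * Real.exp (-(b/2) * x ^ 2)) * Real.exp (-(b/2) * x ^ 2) := by ring
    _ ≤ 2 / b * Real.exp (-(b/2) * x ^ 2) := by
        apply mul_le_mul_of_nonneg_right h3 (Real.exp_pos _).le

lemma integrable_abs_gaussian (v : ℝ≥0) : Integrable (fun x => |x|) (gaussianReal 0 v) := by
  rcases eq_or_ne v 0 with rfl | hv
  · rw [gaussianReal_zero_var]
    exact (integrable_const _).congr (ae_eq_dirac _).symm
  · have hb : (0:ℝ) < (2 * (v:ℝ))⁻¹ := by positivity
    rw [gaussianReal_of_var_ne_zero _ hv]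
    rw [integrable_withDensity_iff (measurable_gaussianPDF _ _)
      (ae_of_all _ fun x => ENNReal.ofReal_lt_top)]
    have : ∀ x : ℝ, |x| * (gaussianPDF 0 v x).toReal
        = (Real.sqrt (2 * π * v))⁻¹ * |x * Real.exp (-((2 * (v:ℝ))⁻¹) * x ^ 2)| := by
      intro x
      rw [gaussianPDF, ENNReal.toReal_ofReal (gaussianPDFReal_nonneg _ _ _), pdfReal_eq v hv,
        abs_mul, abs_of_nonneg (Real.exp_pos _).le]
      ring_nf
    simp only [this]
    exact ((integrable_mul_exp_neg_mul_sq hb).abs.const_mul _)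

lemma integrable_sq_gaussian (v : ℝ≥0) : Integrable (fun x => x ^ 2) (gaussianReal 0 v) := by
  rcases eq_or_ne v 0 with rfl | hv
  · rw [gaussianReal_zero_var]
    exact (integrable_const _).congr (ae_eq_dirac _).symm
  · have hb : (0:ℝ) < (2 * (v:ℝ))⁻¹ := by positivity
    rw [gaussianReal_of_var_ne_zero _ hv]
    rw [integrable_withDensity_iff (measurable_gaussianPDF _ _)
      (ae_of_all _ fun x => ENNReal.ofReal_lt_top)]
    have : ∀ x : ℝ, x ^ 2 * (gaussianPDF 0 v x).toReal
        = (Real.sqrt (2 * π * v))⁻¹ * (x ^ 2 * Real.exp (-((2 * (v:ℝ))⁻¹) * x ^ 2)) := by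
      intro x
      rw [gaussianPDF, ENNReal.toReal_ofReal (gaussianPDFReal_nonneg _ _ _), pdfReal_eq v hv]
      ring_nf
    simp only [this]
    exact (integrable_sq_mul_exp hb).const_mul _

lemma M_pos : 0 < M := by
  rw [M]
  rw [integral_pos_iff_support_of_nonneg (fun x => sq_nonneg x) (integrable_sq_gaussian 1)]
  have hsupp : (Function.support fun x : ℝ => x ^ 2) = {0}ᶜ := by
    ext x; simp [Function.support, pow_eq_zero_iff]
  rw [hsupp]
  have h0 : (gaussianReal 0 1) {0} = 0 :=
    gaussianReal_absolutelyContinuous 0 one_ne_zero (measure_singleton 0)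
  rw [measure_compl (measurableSet_singleton 0) (measure_ne_top _ _), h0]
  simp

end GaussMinAux

namespace GaussMinAux

variable {Ω : Type*} [MeasurableSpace Ω] {P : Measure Ω} [IsProbabilityMeasure P]

lemma integral_abs_rv {Z : Ω → ℝ} (hm : Measurable Z) {v : ℝ≥0}
    (h : Measure.map Z P = gaussianReal 0 v) :
    ∫ ω, |Z ω| ∂P = Real.sqrt v * K := by
  rw [← abs_moment v, ← h, integral_map hm.aemeasurable measurable_abs.aestronglyMeasurable]

lemma integral_sq_rv {Z : Ω → ℝ} (hm : Measurable Z) {v : ℝ≥0}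
    (h : Measure.map Z P = gaussianReal 0 v) :
    ∫ ω, (Z ω) ^ 2 ∂P = (v : ℝ) * M := by
  rw [← sq_moment v, ← h,
    integral_map hm.aemeasurable
      (Measurable.aestronglyMeasurable (by fun_prop : Measurable fun x : ℝ => x ^ 2))]

lemma integrable_abs_rv {Z : Ω → ℝ} (hm : Measurable Z) {v : ℝ≥0}
    (h : Measure.map Z P = gaussianReal 0 v) :
    Integrable (fun ω => |Z ω|) P := by
  have := integrable_abs_gaussian v
  rw [← h] at this
  exact (integrable_map_measure measurable_abs.aestronglyMeasurable hm.aemeasurable).mp this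

lemma integrable_sq_rv {Z : Ω → ℝ} (hm : Measurable Z) {v : ℝ≥0}
    (h : Measure.map Z P = gaussianReal 0 v) :
    Integrable (fun ω => (Z ω) ^ 2) P := by
  have := integrable_sq_gaussian v
  rw [← h] at this
  exact (integrable_map_measure
    (Measurable.aestronglyMeasurable (by fun_prop : Measurable fun x : ℝ => x ^ 2))
    hm.aemeasurable).mp this

/-- pointwise identity used for the convolution of gaussian densities -/
lemma pdf_mul_eq {a b : ℝ≥0} (ha : a ≠ 0) (hb : b ≠ 0) (z x : ℝ) :
    gaussianPDFReal 0 a x * gaussianPDFReal x b z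
      = gaussianPDFReal 0 (a + b) z *
        ((Real.sqrt (π / (((a:ℝ) + b) / (2 * a * b))))⁻¹ *
          Real.exp (-((((a:ℝ) + b) / (2 * a * b))) * (x - (a:ℝ) * z / ((a:ℝ) + b)) ^ 2)) := by
  have hA : (0:ℝ) < a := by positivity
  have hB : (0:ℝ) < b := by positivity
  have hcast : ((a + b : ℝ≥0) : ℝ) = (a:ℝ) + (b:ℝ) := by push_cast; ring
  rw [gaussianPDFReal, gaussianPDFReal, gaussianPDFReal, hcast]
  have hconst : (Real.sqrt (2 * π * (a:ℝ)))⁻¹ * (Real.sqrt (2 * π * (b:ℝ)))⁻¹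
      = (Real.sqrt (2 * π * ((a:ℝ) + b)))⁻¹
        * (Real.sqrt (π / (((a:ℝ) + b) / (2 * a * b))))⁻¹ := by
    rw [← mul_inv, ← mul_inv, ← Real.sqrt_mul (by positivity), ← Real.sqrt_mul (by positivity)]
    congr 2
    field_simp
  have hexp : Real.exp (-(x - 0) ^ 2 / (2 * (a:ℝ))) * Real.exp (-(z - x) ^ 2 / (2 * (b:ℝ)))
      = Real.exp (-(z - 0) ^ 2 / (2 * ((a:ℝ) + b)))
        * Real.exp (-((((a:ℝ) + b) / (2 * a * b))) * (x - (a:ℝ) * z / ((a:ℝ) + b)) ^ 2) := by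
    rw [← Real.exp_add, ← Real.exp_add]
    congr 1
    field_simp
    ring
  calc (Real.sqrt (2 * π * (a:ℝ)))⁻¹ * Real.exp (-(x - 0) ^ 2 / (2 * (a:ℝ)))
        * ((Real.sqrt (2 * π * (b:ℝ)))⁻¹ * Real.exp (-(z - x) ^ 2 / (2 * (b:ℝ))))
      = ((Real.sqrt (2 * π * (a:ℝ)))⁻¹ * (Real.sqrt (2 * π * (b:ℝ)))⁻¹)
        * (Real.exp (-(x - 0) ^ 2 / (2 * (a:ℝ))) * Real.exp (-(z - x) ^ 2 / (2 * (b:ℝ)))) := by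
        ring
    _ = ((Real.sqrt (2 * π * ((a:ℝ) + b)))⁻¹
          * (Real.sqrt (π / (((a:ℝ) + b) / (2 * a * b))))⁻¹)
        * (Real.exp (-(z - 0) ^ 2 / (2 * ((a:ℝ) + b)))
          * Real.exp (-((((a:ℝ) + b) / (2 * a * b))) * (x - (a:ℝ) * z / ((a:ℝ) + b)) ^ 2)) := by
        rw [hconst, hexp]
    _ = _ := by ring

lemma integrable_pdf_mul {a b : ℝ≥0} (ha : a ≠ 0) (hb : b ≠ 0) (z : ℝ) :
    Integrable (fun x => gaussianPDFReal 0 a x * gaussianPDFReal x b z) := by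
  have hA : (0:ℝ) < a := by positivity
  have hB : (0:ℝ) < b := by positivity
  have hc : (0:ℝ) < ((a:ℝ) + b) / (2 * a * b) := by positivity
  have heq : (fun x => gaussianPDFReal 0 a x * gaussianPDFReal x b z)
      = fun x => gaussianPDFReal 0 (a + b) z *
        ((Real.sqrt (π / (((a:ℝ) + b) / (2 * a * b))))⁻¹ *
          Real.exp (-((((a:ℝ) + b) / (2 * a * b))) * (x - (a:ℝ) * z / ((a:ℝ) + b)) ^ 2)) :=
    funext fun x => pdf_mul_eq ha hb z x
  rw [heq]
  exact (((integrable_exp_neg_mul_sq hc).comp_sub_right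
    ((a:ℝ) * z / ((a:ℝ) + b))).const_mul _).const_mul _

/-- pointwise convolution identity for gaussian densities -/
lemma pdf_conv {a b : ℝ≥0} (ha : a ≠ 0) (hb : b ≠ 0) (z : ℝ) :
    ∫ x, gaussianPDFReal 0 a x * gaussianPDFReal x b z = gaussianPDFReal 0 (a + b) z := by
  have hA : (0:ℝ) < a := by positivity
  have hB : (0:ℝ) < b := by positivity
  have hc : (0:ℝ) < ((a:ℝ) + b) / (2 * a * b) := by positivity
  have heq := funext fun x => pdf_mul_eq ha hb z x
  rw [heq, integral_const_mul, integral_const_mul]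
  have hint : (∫ x : ℝ, Real.exp (-((((a:ℝ) + b) / (2 * a * b)))
      * (x - (a:ℝ) * z / ((a:ℝ) + b)) ^ 2))
      = Real.sqrt (π / (((a:ℝ) + b) / (2 * a * b))) := by
    rw [show (fun x : ℝ => Real.exp (-((((a:ℝ) + b) / (2 * a * b)))
        * (x - (a:ℝ) * z / ((a:ℝ) + b)) ^ 2))
      = fun x : ℝ => Real.exp (-((((a:ℝ) + b) / (2 * a * b)))
        * (x + -((a:ℝ) * z / ((a:ℝ) + b))) ^ 2) from by
        funext x; rw [sub_eq_add_neg]]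
    rw [integral_add_right_eq_self (fun x : ℝ => Real.exp (-((((a:ℝ) + b) / (2 * a * b))) * x ^ 2))
      (-((a:ℝ) * z / ((a:ℝ) + b)))]
    exact integral_gaussian _
  rw [hint, inv_mul_cancel₀ (ne_of_gt (Real.sqrt_pos.mpr (by positivity))), mul_one]

set_option maxHeartbeats 1000000 in
/-- convolution of centered gaussians -/
lemma gaussian_conv (a b : ℝ≥0) :
    Measure.map (fun p : ℝ × ℝ => p.1 + p.2) ((gaussianReal 0 a).prod (gaussianReal 0 b))
      = gaussianReal 0 (a + b) := by
  rcases eq_or_ne a 0 with rfl | ha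
  · rw [gaussianReal_zero_var, Measure.dirac_prod,
      Measure.map_map measurable_add measurable_prodMk_left]
    have h : ((fun p : ℝ × ℝ => p.1 + p.2) ∘ Prod.mk (0:ℝ)) = id := by
      funext y; simp
    rw [h, Measure.map_id, zero_add]
  rcases eq_or_ne b 0 with rfl | hb
  · rw [gaussianReal_zero_var, Measure.prod_dirac,
      Measure.map_map measurable_add measurable_prodMk_right]
    have h : ((fun p : ℝ × ℝ => p.1 + p.2) ∘ fun x : ℝ => (x, (0:ℝ))) = id := by
      funext y; simp
    rw [h, Measure.map_id, add_zero]
  have hab : a + b ≠ 0 := by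
    intro h
    exact ha (add_eq_zero.mp h).1
  have hGb : ∀ x : ℝ, Measurable fun z => gaussianPDF x b z := fun x =>
    (measurable_gaussianPDF x b)
  have hprodmeas : Measurable fun p : ℝ × ℝ => gaussianPDF p.1 b p.2 := by
    apply ENNReal.measurable_ofReal.comp
    have : (fun p : ℝ × ℝ => gaussianPDFReal p.1 b p.2)
        = fun p : ℝ × ℝ => (Real.sqrt (2 * π * b))⁻¹ * Real.exp (- (p.2 - p.1)^2 / (2 * b)) := by
      funext p; rfl
    rw [this]
    fun_prop
  ext s hs
  rw [Measure.map_apply measurable_add hs, Measure.prod_apply (measurable_add hs)]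
  have h1 : ∀ x : ℝ, (gaussianReal 0 b) (Prod.mk x ⁻¹' ((fun p : ℝ × ℝ => p.1 + p.2) ⁻¹' s))
      = ∫⁻ z in s, gaussianPDF x b z := by
    intro x
    have hpre : (Prod.mk x ⁻¹' ((fun p : ℝ × ℝ => p.1 + p.2) ⁻¹' s))
        = (fun y => x + y) ⁻¹' s := rfl
    rw [hpre, ← Measure.map_apply (measurable_const_add x) hs, gaussianReal_map_const_add,
      zero_add, gaussianReal_apply _ hb]
  simp_rw [h1]
  have hF : Measurable fun x => ∫⁻ z in s, gaussianPDF x b z :=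
    Measurable.lintegral_prod_right (ν := volume.restrict s)
      (f := fun x z => gaussianPDF x b z) hprodmeas
  rw [gaussianReal_of_var_ne_zero 0 ha,
    lintegral_withDensity_eq_lintegral_mul _ (measurable_gaussianPDF 0 a) hF]
  have h2 : ∀ x, (gaussianPDF 0 a * fun x => ∫⁻ z in s, gaussianPDF x b z) x
      = ∫⁻ z in s, gaussianPDF 0 a x * gaussianPDF x b z := by
    intro x
    simp only [Pi.mul_apply]
    rw [← lintegral_const_mul _ (hGb x)]
  simp_rw [h2]
  rw [lintegral_lintegral_swap]
  swap
  · exact (((measurable_gaussianPDF 0 a).comp measurable_fst).mul hprodmeas).aemeasurable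
  have h3 : ∀ z, (∫⁻ x, gaussianPDF 0 a x * gaussianPDF x b z)
      = gaussianPDF 0 (a + b) z := by
    intro z
    have hnn : 0 ≤ᵐ[volume] fun x => gaussianPDFReal 0 a x * gaussianPDFReal x b z :=
      ae_of_all _ fun x => mul_nonneg (gaussianPDFReal_nonneg _ _ _) (gaussianPDFReal_nonneg _ _ _)
    have hofr : ∀ x, gaussianPDF 0 a x * gaussianPDF x b z
        = ENNReal.ofReal (gaussianPDFReal 0 a x * gaussianPDFReal x b z) := by
      intro x
      rw [gaussianPDF, gaussianPDF, ← ENNReal.ofReal_mul (gaussianPDFReal_nonneg _ _ _)]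
    simp_rw [hofr]
    rw [← ofReal_integral_eq_lintegral_ofReal (integrable_pdf_mul ha hb z) hnn,
      pdf_conv ha hb z]
    rfl
  simp_rw [h3]
  rw [gaussianReal_apply _ hab]

lemma indep_add_gauss {Y₁ Y₂ : Ω → ℝ} (h1m : Measurable Y₁) (h2m : Measurable Y₂)
    (hind : IndepFun Y₁ Y₂ P) {w₁ w₂ : ℝ≥0}
    (h1 : Measure.map Y₁ P = gaussianReal 0 w₁) (h2 : Measure.map Y₂ P = gaussianReal 0 w₂) :
    Measure.map (fun ω => Y₁ ω + Y₂ ω) P = gaussianReal 0 (w₁ + w₂) := by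
  have hpair : Measure.map (fun ω => (Y₁ ω, Y₂ ω)) P
      = (Measure.map Y₁ P).prod (Measure.map Y₂ P) :=
    (indepFun_iff_map_prod_eq_prod_map_map h1m.aemeasurable h2m.aemeasurable).mp hind
  have hcomp : (fun ω => Y₁ ω + Y₂ ω)
      = (fun p : ℝ × ℝ => p.1 + p.2) ∘ (fun ω => (Y₁ ω, Y₂ ω)) := rfl
  rw [hcomp, ← Measure.map_map measurable_add (h1m.prodMk h2m), hpair, h1, h2]
  exact gaussian_conv w₁ w₂

lemma min_abs_eq (x y : ℝ) :
    min |x| |y| = |x| + |y| - (|x + y| + |x - y|) / 2 := by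
  rcases abs_cases x with ⟨hx1, hx2⟩ | ⟨hx1, hx2⟩ <;>
    rcases abs_cases y with ⟨hy1, hy2⟩ | ⟨hy1, hy2⟩ <;>
    rcases abs_cases (x + y) with ⟨hs1, hs2⟩ | ⟨hs1, hs2⟩ <;>
    rcases abs_cases (x - y) with ⟨hd1, hd2⟩ | ⟨hd1, hd2⟩ <;>
    rcases le_total (|x|) (|y|) with h | h <;>
    simp only [min_eq_left, min_eq_right, h] <;>
    linarith

end GaussMinAux

open GaussMinAux

theorem stmt_14 {Ω : Type*} [MeasurableSpace Ω] (P : Measure Ω) [IsProbabilityMeasure P]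
    (X₁ X₂ Y₁ Y₂ : Ω → ℝ)
    (hmX₁ : Measurable X₁) (hmX₂ : Measurable X₂)
    (hmY₁ : Measurable Y₁) (hmY₂ : Measurable Y₂)
    (hXgauss : ∀ c d : ℝ, ∃ v : NNReal,
      Measure.map (fun ω => c * X₁ ω + d * X₂ ω) P = gaussianReal 0 v)
    (hYindep : IndepFun Y₁ Y₂ P)
    (hY₁ : ∃ v : NNReal, Measure.map Y₁ P = gaussianReal 0 v)
    (hY₂ : ∃ v : NNReal, Measure.map Y₂ P = gaussianReal 0 v)
    (hvar₁ : ∫ ω, (X₁ ω) ^ 2 ∂P = ∫ ω, (Y₁ ω) ^ 2 ∂P)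
    (hvar₂ : ∫ ω, (X₂ ω) ^ 2 ∂P = ∫ ω, (Y₂ ω) ^ 2 ∂P) :
    ∫ ω, min (|X₁ ω|) (|X₂ ω|) ∂P ≥ ∫ ω, min (|Y₁ ω|) (|Y₂ ω|) ∂P := by
  obtain ⟨v₁, hv1⟩ := hXgauss 1 0
  simp only [one_mul, zero_mul, add_zero] at hv1
  obtain ⟨v₂, hv2⟩ := hXgauss 0 1
  simp only [one_mul, zero_mul, zero_add] at hv2
  obtain ⟨vp, hvp⟩ := hXgauss 1 1
  simp only [one_mul] at hvp
  obtain ⟨vm, hvm⟩ := hXgauss 1 (-1)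
  simp only [one_mul, neg_one_mul, ← sub_eq_add_neg] at hvm
  obtain ⟨w₁, hw1⟩ := hY₁
  obtain ⟨w₂, hw2⟩ := hY₂
  have hMpos := M_pos
  -- identify the variances of Y with those of X
  have e1 : w₁ = v₁ := by
    have h1 := integral_sq_rv hmX₁ hv1
    have h2 := integral_sq_rv hmY₁ hw1
    rw [h1, h2] at hvar₁
    exact NNReal.coe_injective (mul_right_cancel₀ (ne_of_gt hMpos) hvar₁).symm
  have e2 : w₂ = v₂ := by
    have h1 := integral_sq_rv hmX₂ hv2
    have h2 := integral_sq_rv hmY₂ hw2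
    rw [h1, h2] at hvar₂
    exact NNReal.coe_injective (mul_right_cancel₀ (ne_of_gt hMpos) hvar₂).symm
  rw [e1] at hw1
  rw [e2] at hw2
  -- the law of -Y₂
  have hneg : Measure.map (fun ω => -(Y₂ ω)) P = gaussianReal 0 v₂ := by
    have hc : (fun ω => -(Y₂ ω)) = (fun x : ℝ => -1 * x) ∘ Y₂ := by
      funext ω; simp
    rw [hc, ← Measure.map_map (by fun_prop) hmY₂, hw2, gaussianReal_map_const_mul]
    norm_num
  have hindn : IndepFun Y₁ (fun ω => -(Y₂ ω)) P := hYindep.comp measurable_id measurable_neg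
  -- laws of the sum and difference of Y
  have hYp : Measure.map (fun ω => Y₁ ω + Y₂ ω) P = gaussianReal 0 (v₁ + v₂) :=
    indep_add_gauss hmY₁ hmY₂ hYindep hw1 hw2
  have hYm : Measure.map (fun ω => Y₁ ω - Y₂ ω) P = gaussianReal 0 (v₁ + v₂) := by
    have := indep_add_gauss hmY₁ hmY₂.neg hindn hw1 hneg
    simpa [sub_eq_add_neg] using this
  -- parallelogram identity for the variances of X
  have hP : (vp : ℝ) + vm = 2 * v₁ + 2 * v₂ := by
    have ip := integrable_sq_rv (by fun_prop) hvp
    have im := integrable_sq_rv (by fun_prop) hvm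
    have i1 := integrable_sq_rv hmX₁ hv1
    have i2 := integrable_sq_rv hmX₂ hv2
    have hsum : ∫ ω, ((X₁ ω + X₂ ω) ^ 2 + (X₁ ω - X₂ ω) ^ 2) ∂P
        = ∫ ω, (2 * X₁ ω ^ 2 + 2 * X₂ ω ^ 2) ∂P := by
      apply integral_congr_ae
      filter_upwards with ω
      ring
    rw [integral_add ip im, integral_add (i1.const_mul 2) (i2.const_mul 2),
      integral_sq_rv (by fun_prop) hvp, integral_sq_rv (by fun_prop) hvm,
      integral_const_mul, integral_const_mul, integral_sq_rv hmX₁ hv1,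
      integral_sq_rv hmX₂ hv2] at hsum
    have h' : ((vp : ℝ) + vm) * M = (2 * v₁ + 2 * v₂) * M := by linarith
    exact mul_right_cancel₀ (ne_of_gt hMpos) h'
  -- compute both integrals of the minimum
  have ia1 := integrable_abs_rv hmX₁ hv1
  have ia2 := integrable_abs_rv hmX₂ hv2
  have iap := integrable_abs_rv (by fun_prop) hvp
  have iam := integrable_abs_rv (by fun_prop) hvm
  have ib1 := integrable_abs_rv hmY₁ hw1
  have ib2 := integrable_abs_rv hmY₂ hw2
  have ibp := integrable_abs_rv (by fun_prop) hYp
  have ibm := integrable_abs_rv (by fun_prop) hYm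
  have hIX : ∫ ω, min (|X₁ ω|) (|X₂ ω|) ∂P
      = Real.sqrt v₁ * K + Real.sqrt v₂ * K
        - (Real.sqrt vp * K + Real.sqrt vm * K) / 2 := by
    calc ∫ ω, min (|X₁ ω|) (|X₂ ω|) ∂P
        = ∫ ω, (|X₁ ω| + |X₂ ω| - (|X₁ ω + X₂ ω| + |X₁ ω - X₂ ω|) / 2) ∂P :=
          integral_congr_ae (ae_of_all _ fun ω => min_abs_eq _ _)
      _ = _ := by
          rw [integral_sub
              (show Integrable (fun ω => |X₁ ω| + |X₂ ω|) P from ia1.add ia2)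
              (show Integrable (fun ω => (|X₁ ω + X₂ ω| + |X₁ ω - X₂ ω|) / 2) P from
                (iap.add iam).div_const 2),
            integral_add ia1 ia2,
            integral_div, integral_add iap iam, integral_abs_rv hmX₁ hv1,
            integral_abs_rv hmX₂ hv2, integral_abs_rv (by fun_prop) hvp,
            integral_abs_rv (by fun_prop) hvm]
  have hIY : ∫ ω, min (|Y₁ ω|) (|Y₂ ω|) ∂P
      = Real.sqrt v₁ * K + Real.sqrt v₂ * K
        - (Real.sqrt (v₁ + v₂ : ℝ≥0) * K + Real.sqrt (v₁ + v₂ : ℝ≥0) * K) / 2 := by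
    calc ∫ ω, min (|Y₁ ω|) (|Y₂ ω|) ∂P
        = ∫ ω, (|Y₁ ω| + |Y₂ ω| - (|Y₁ ω + Y₂ ω| + |Y₁ ω - Y₂ ω|) / 2) ∂P :=
          integral_congr_ae (ae_of_all _ fun ω => min_abs_eq _ _)
      _ = _ := by
          rw [integral_sub
              (show Integrable (fun ω => |Y₁ ω| + |Y₂ ω|) P from ib1.add ib2)
              (show Integrable (fun ω => (|Y₁ ω + Y₂ ω| + |Y₁ ω - Y₂ ω|) / 2) P from
                (ibp.add ibm).div_const 2),
            integral_add ib1 ib2,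
            integral_div, integral_add ibp ibm, integral_abs_rv hmY₁ hw1,
            integral_abs_rv hmY₂ hw2, integral_abs_rv (by fun_prop) hYp,
            integral_abs_rv (by fun_prop) hYm]
  rw [hIX, hIY]
  have hcast : ((v₁ + v₂ : ℝ≥0) : ℝ) = (v₁ : ℝ) + (v₂ : ℝ) := by push_cast; ring
  have key : Real.sqrt vp + Real.sqrt vm ≤ 2 * Real.sqrt ((v₁ + v₂ : ℝ≥0) : ℝ) := by
    have h1 := Real.sq_sqrt (vp : ℝ≥0).coe_nonneg
    have h2 := Real.sq_sqrt (vm : ℝ≥0).coe_nonneg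
    have h3 : Real.sqrt ((v₁ + v₂ : ℝ≥0) : ℝ) ^ 2 = (v₁ : ℝ) + v₂ := by
      rw [Real.sq_sqrt (v₁ + v₂ : ℝ≥0).coe_nonneg, hcast]
    have n1 := Real.sqrt_nonneg ((vp : ℝ≥0) : ℝ)
    have n2 := Real.sqrt_nonneg ((vm : ℝ≥0) : ℝ)
    have n3 := Real.sqrt_nonneg (((v₁ + v₂ : ℝ≥0) : ℝ≥0) : ℝ)
    nlinarith [sq_nonneg (Real.sqrt ((vp : ℝ≥0) : ℝ) - Real.sqrt ((vm : ℝ≥0) : ℝ)),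
      sq_nonneg (Real.sqrt ((vp : ℝ≥0) : ℝ) + Real.sqrt ((vm : ℝ≥0) : ℝ)
        - 2 * Real.sqrt (((v₁ + v₂ : ℝ≥0) : ℝ≥0) : ℝ)),
      sq_nonneg (Real.sqrt ((vp : ℝ≥0) : ℝ) + Real.sqrt ((vm : ℝ≥0) : ℝ)
        + 2 * Real.sqrt (((v₁ + v₂ : ℝ≥0) : ℝ≥0) : ℝ)), hP]
  have hK := K_nonneg
  have := mul_le_mul_of_nonneg_right key hK
  linarith
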